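/- Let τ_1 and τ_2 be independent random variables on a probability space with τ_i exponentially distributed with rate λ_i > 0 (i.e., P(τ_i > t) = e^{−λ_i t} for t ≥ 0), and let θ_1, θ_2 ≥ 0 and s_1, s_2 > 0. Then E[s_1 e^{−θ_1 τ_1} · 1_{τ_1 < τ_2}] = s_1 λ_1/(θ_1 + λ_1 + λ_2) and E[s_2 e^{−θ_2 τ_2} · 1_{τ_2 < τ_1}] = s_2 λ_2/(θ_2 + λ_1 + λ_2); consequently the actuarial fairness condition E[s_1 e^{−θ_1 τ_1} · 1_{τ_1 < τ_2}] = E[s_2 e^{−θ_2 τ_2} · 1_{τ_2 < τ_1}] holds if and only if s_1/s_2 = (λ_2/λ_1) · (θ_1 + λ_1 + λ_2)/(θ_2 + λ_1 + λ_2). -/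

import Mathlib

open MeasureTheory
open scoped ProbabilityTheory

open Set Real ProbabilityTheory
private lemma aux_integral_exp {a : ℝ} (ha : 0 < a) :
    ∫ x in Set.Ioi (0:ℝ), Real.exp (-(a * x)) = 1 / a := by
  have h := integral_comp_mul_left_Ioi (fun x => Real.exp (-x)) 0 ha
  simp only [mul_zero] at h
  rw [h, integral_exp_neg_Ioi, neg_zero, Real.exp_zero, smul_eq_mul, mul_one, one_div]

private lemma map_eq_expMeasure {Ω : Type*} [MeasureSpace Ω] [IsProbabilityMeasure (ℙ : Measure Ω)]
    {lam : ℝ} (hlam : 0 < lam) {τ : Ω → ℝ} (hm : Measurable τ)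
    (hlaw : ∀ t, 0 ≤ t → ℙ {ω | t < τ ω} = ENNReal.ofReal (Real.exp (-lam * t))) :
    Measure.map τ ℙ = ProbabilityTheory.expMeasure lam := by
  have hP : IsProbabilityMeasure (expMeasure lam) := isProbabilityMeasure_expMeasure hlam
  haveI := hP
  refine MeasureTheory.Measure.ext_of_Iic _ _ (fun t => ?_)
  rw [Measure.map_apply hm measurableSet_Iic]
  rw [← ProbabilityTheory.ofReal_cdf (expMeasure lam) t]
  rw [cdf_expMeasure_eq hlam]
  by_cases ht : 0 ≤ t
  · have hpre : τ ⁻¹' Set.Iic t = {ω | t < τ ω}ᶜ := by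
      ext ω; simp [Set.mem_setOf_eq, not_lt]
    rw [hpre, measure_compl (measurableSet_lt measurable_const hm) (measure_ne_top _ _),
      hlaw t ht, measure_univ, if_pos ht,
      ENNReal.ofReal_sub _ (Real.exp_nonneg _), ENNReal.ofReal_one, neg_mul]
  · rw [if_neg ht, ENNReal.ofReal_zero]
    have h0 : ℙ ({ω | (0:ℝ) < τ ω}ᶜ) = 0 := by
      rw [measure_compl (measurableSet_lt measurable_const hm) (measure_ne_top _ _),
        hlaw 0 le_rfl]
      simp
    refine measure_mono_null (fun ω hω => ?_) h0
    simp only [Set.mem_compl_iff, Set.mem_setOf_eq, not_lt] at *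
    exact le_trans hω (le_of_lt (not_le.mp ht))

private lemma key {Ω : Type*} [MeasureSpace Ω] [IsProbabilityMeasure (ℙ : Measure Ω)]
    (lam1 lam2 θ s : ℝ) (hlam1 : 0 < lam1) (hlam2 : 0 < lam2) (hθ : 0 ≤ θ) (hs : 0 < s)
    (τ1 τ2 : Ω → ℝ) (hm1 : Measurable τ1) (hm2 : Measurable τ2)
    (hindep : ProbabilityTheory.IndepFun τ1 τ2 ℙ)
    (hlaw1 : ∀ t, 0 ≤ t → ℙ {ω | t < τ1 ω} = ENNReal.ofReal (Real.exp (-lam1 * t)))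
    (hlaw2 : ∀ t, 0 ≤ t → ℙ {ω | t < τ2 ω} = ENNReal.ofReal (Real.exp (-lam2 * t))) :
    (∫ ω, Set.indicator {ω' | τ1 ω' < τ2 ω'}
        (fun ω' => s * Real.exp (-θ * τ1 ω')) ω ∂ℙ)
      = s * lam1 / (θ + lam1 + lam2) := by
  have hμ1 : Measure.map τ1 ℙ = expMeasure lam1 := map_eq_expMeasure hlam1 hm1 hlaw1
  have hμ2 : Measure.map τ2 ℙ = expMeasure lam2 := map_eq_expMeasure hlam2 hm2 hlaw2
  haveI : IsProbabilityMeasure (expMeasure lam1) := isProbabilityMeasure_expMeasure hlam1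
  haveI : IsProbabilityMeasure (expMeasure lam2) := isProbabilityMeasure_expMeasure hlam2
  set c : ℝ := θ + lam1 + lam2 with hc
  have hcpos : 0 < c := by positivity
  -- the joint law
  have hprod : Measure.map (fun ω => (τ1 ω, τ2 ω)) ℙ
      = (expMeasure lam1).prod (expMeasure lam2) := by
    rw [← hμ1, ← hμ2]
    exact (ProbabilityTheory.indepFun_iff_map_prod_eq_prod_map_map
      hm1.aemeasurable hm2.aemeasurable).mp hindep
  set F : ℝ × ℝ → ℝ :=
    fun p => Set.indicator {q : ℝ × ℝ | q.1 < q.2} (fun q => s * Real.exp (-θ * q.1)) p with hF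
  have hFmeas : Measurable F := by
    apply Measurable.indicator
    · exact (measurable_fst.const_mul (-θ)).exp.const_mul s
    · exact measurableSet_lt measurable_fst measurable_snd
  have hFnonneg : ∀ p, 0 ≤ F p := by
    intro p
    refine Set.indicator_nonneg (fun q _ => ?_) p
    positivity
  have hcomp : ∀ ω, Set.indicator {ω' | τ1 ω' < τ2 ω'}
      (fun ω' => s * Real.exp (-θ * τ1 ω')) ω = F (τ1 ω, τ2 ω) := by
    intro ω
    by_cases h : τ1 ω < τ2 ω <;>
      simp [hF, Set.indicator, h]
  calc (∫ ω, Set.indicator {ω' | τ1 ω' < τ2 ω'}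
        (fun ω' => s * Real.exp (-θ * τ1 ω')) ω ∂ℙ)
      = ∫ ω, F (τ1 ω, τ2 ω) ∂ℙ := by simp_rw [hcomp]
    _ = ∫ p, F p ∂((expMeasure lam1).prod (expMeasure lam2)) := by
        rw [← hprod, integral_map (hm1.prodMk hm2).aemeasurable hFmeas.aestronglyMeasurable]
    _ = (∫⁻ p, ENNReal.ofReal (F p) ∂((expMeasure lam1).prod (expMeasure lam2))).toReal := by
        rw [integral_eq_lintegral_of_nonneg_ae (ae_of_all _ hFnonneg)
          hFmeas.aestronglyMeasurable]
    _ = s * lam1 / c := by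
        rw [MeasureTheory.lintegral_prod _ (hFmeas.ennreal_ofReal.aemeasurable)]
        have hinner : ∀ x : ℝ, (∫⁻ y, ENNReal.ofReal (F (x, y)) ∂(expMeasure lam2))
            = ENNReal.ofReal (s * Real.exp (-θ * x)) * (expMeasure lam2) (Set.Ioi x) := by
          intro x
          have : (fun y => ENNReal.ofReal (F (x, y)))
              = (Set.Ioi x).indicator (fun _ => ENNReal.ofReal (s * Real.exp (-θ * x))) := by
            funext y
            by_cases h : x < y <;> simp [hF, Set.indicator, h]
          rw [this, lintegral_indicator measurableSet_Ioi _, setLIntegral_const]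
        simp_rw [hinner]
        have hIoi : ∀ x : ℝ, 0 ≤ x →
            (expMeasure lam2) (Set.Ioi x) = ENNReal.ofReal (Real.exp (-lam2 * x)) := by
          intro x hx
          rw [← hμ2, Measure.map_apply hm2 measurableSet_Ioi]
          exact hlaw2 x hx
        -- replace integrand a.e.
        have h0 : (expMeasure lam1) (Set.Iic (0:ℝ)) = 0 := by
          rw [← ProbabilityTheory.ofReal_cdf (expMeasure lam1) 0,
            cdf_expMeasure_eq hlam1]
          simp
        have haepos : ∀ᵐ x ∂(expMeasure lam1), 0 < x := by
          rw [ae_iff]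
          refine measure_mono_null (fun x hx => ?_) h0
          simpa using not_lt.mp hx
        have hae : (fun x => ENNReal.ofReal (s * Real.exp (-θ * x)) * (expMeasure lam2) (Set.Ioi x))
            =ᵐ[expMeasure lam1]
            (Set.Ioi (0:ℝ)).indicator
              (fun x => ENNReal.ofReal (s * Real.exp (-(θ + lam2) * x))) := by
          filter_upwards [haepos] with x hx
          rw [hIoi x hx.le, Set.indicator_of_mem (Set.mem_Ioi.2 hx),
            ← ENNReal.ofReal_mul (by positivity)]
          congr 1
          rw [mul_assoc, ← Real.exp_add]
          ring_nf
        rw [lintegral_congr_ae hae, lintegral_indicator measurableSet_Ioi,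
          show expMeasure lam1 = volume.withDensity (exponentialPDF lam1) from rfl,
          setLIntegral_withDensity_eq_setLIntegral_mul _
            (show Measurable (exponentialPDF lam1) by
              unfold exponentialPDF
              exact (measurable_exponentialPDFReal lam1).ennreal_ofReal)
            (by fun_prop) measurableSet_Ioi]
        have hcong : ∀ᵐ x ∂volume, x ∈ Set.Ioi (0:ℝ) →
            (exponentialPDF lam1 * fun x => ENNReal.ofReal (s * Real.exp (-(θ + lam2) * x))) x
              = ENNReal.ofReal ((s * lam1) * Real.exp (-(c * x))) := by
          refine ae_of_all _ (fun x hx => ?_)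
          rw [Pi.mul_apply, exponentialPDF_of_nonneg (le_of_lt hx),
            ← ENNReal.ofReal_mul (by positivity)]
          congr 1
          rw [mul_mul_mul_comm, ← Real.exp_add, hc]
          ring_nf
        rw [setLIntegral_congr_fun_ae measurableSet_Ioi hcong]
        have hint : IntegrableOn (fun x => (s * lam1) * Real.exp (-(c * x))) (Set.Ioi 0) := by
          have := (exp_neg_integrableOn_Ioi 0 hcpos).const_mul (s * lam1)
          simp only [neg_mul] at this
          exact this
        rw [← MeasureTheory.ofReal_integral_eq_lintegral_ofReal hint
            (ae_of_all _ (fun x => by positivity)),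
          integral_const_mul, aux_integral_exp hcpos,
          ENNReal.toReal_ofReal (by positivity)]
        ring

/-- Two-peer decentralized annuity with independent exponential lifetimes and
exponential drawdowns: expected forfeited balances equal `s_i λ_i/(θ_i+λ_1+λ_2)`, and
actuarial fairness holds iff `s_1/s_2 = (λ_2/λ_1)(θ_1+λ_1+λ_2)/(θ_2+λ_1+λ_2)`. -/
theorem stmt_17 {Ω : Type*} [MeasureSpace Ω]
    [IsProbabilityMeasure (ℙ : Measure Ω)]
    (lam1 lam2 θ1 θ2 s1 s2 : ℝ) (hlam1 : 0 < lam1) (hlam2 : 0 < lam2)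
    (hθ1 : 0 ≤ θ1) (hθ2 : 0 ≤ θ2) (hs1 : 0 < s1) (hs2 : 0 < s2)
    (τ1 τ2 : Ω → ℝ) (hm1 : Measurable τ1) (hm2 : Measurable τ2)
    (hindep : ProbabilityTheory.IndepFun τ1 τ2 ℙ)
    (hlaw1 : ∀ t, 0 ≤ t → ℙ {ω | t < τ1 ω} = ENNReal.ofReal (Real.exp (-lam1 * t)))
    (hlaw2 : ∀ t, 0 ≤ t → ℙ {ω | t < τ2 ω} = ENNReal.ofReal (Real.exp (-lam2 * t))) :
    (∫ ω, Set.indicator {ω' | τ1 ω' < τ2 ω'}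
        (fun ω' => s1 * Real.exp (-θ1 * τ1 ω')) ω ∂ℙ)
      = s1 * lam1 / (θ1 + lam1 + lam2) ∧
    (∫ ω, Set.indicator {ω' | τ2 ω' < τ1 ω'}
        (fun ω' => s2 * Real.exp (-θ2 * τ2 ω')) ω ∂ℙ)
      = s2 * lam2 / (θ2 + lam1 + lam2) ∧
    ((∫ ω, Set.indicator {ω' | τ1 ω' < τ2 ω'}
          (fun ω' => s1 * Real.exp (-θ1 * τ1 ω')) ω ∂ℙ)
        = (∫ ω, Set.indicator {ω' | τ2 ω' < τ1 ω'}
            (fun ω' => s2 * Real.exp (-θ2 * τ2 ω')) ω ∂ℙ)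
      ↔ s1 / s2 = (lam2 / lam1) * ((θ1 + lam1 + lam2) / (θ2 + lam1 + lam2))) := by
  have h1 := key lam1 lam2 θ1 s1 hlam1 hlam2 hθ1 hs1 τ1 τ2 hm1 hm2 hindep hlaw1 hlaw2
  have h2' := key lam2 lam1 θ2 s2 hlam2 hlam1 hθ2 hs2 τ2 τ1 hm2 hm1 hindep.symm hlaw2 hlaw1
  have h2 : (∫ ω, Set.indicator {ω' | τ2 ω' < τ1 ω'}
      (fun ω' => s2 * Real.exp (-θ2 * τ2 ω')) ω ∂ℙ) = s2 * lam2 / (θ2 + lam1 + lam2) := by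
    rw [h2']; ring_nf
  refine ⟨h1, h2, ?_⟩
  rw [h1, h2]
  have hd1 : (0:ℝ) < θ1 + lam1 + lam2 := by positivity
  have hd2 : (0:ℝ) < θ2 + lam1 + lam2 := by positivity
  rw [div_eq_div_iff hd1.ne' hd2.ne', div_mul_div_comm,
    div_eq_div_iff hs2.ne' (by positivity : (0:ℝ) < lam1 * (θ2 + lam1 + lam2)).ne']
  constructor <;> intro h <;> linear_combination h
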